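/- There is a universal constant c > 0 such that for all n and all p, q ∈ [0,1]^n, ‖Ber(p) − Ber(q)‖_TV ≥ c · min{1, ‖p−q‖_2}. -/

import Mathlib

open Finset

/-- Total variation distance between two distributions on a finite set. -/
noncomputable def tv {Ω : Type*} [Fintype Ω] (P Q : Ω → ℝ) : ℝ :=
  (1/2) * ∑ ω, |P ω - Q ω|

/-- Product Bernoulli distribution on `{0,1}^n` with parameters `p`. -/
def berProd {n : ℕ} (p : Fin n → ℝ) : (Fin n → Bool) → ℝ :=
  fun ω => ∏ i, if ω i then p i else 1 - p i

namespace BerTV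

variable {γ β : Type*} [Fintype γ] [Fintype β] [DecidableEq β]

lemma sum_pi_push : ∀ {n : ℕ} (ν : Fin n → γ → ℝ) (h : Fin n → γ → β)
    (g : (Fin n → β) → ℝ),
    ∑ ζ : Fin n → γ, (∏ i, ν i (ζ i)) * g (fun i => h i (ζ i))
      = ∑ η : Fin n → β, (∏ i, ∑ x : γ, (if h i x = η i then ν i x else 0)) * g η := by
  intro n
  induction n with
  | zero =>
      intro ν h g
      rw [Fintype.sum_subsingleton _ (fun i : Fin 0 => i.elim0),
        Fintype.sum_subsingleton _ (fun i : Fin 0 => i.elim0)]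
      simp only [Finset.univ_eq_empty, Finset.prod_empty, one_mul]
      exact congrArg g (Subsingleton.elim _ _)
  | succ n IH =>
      intro ν h g
      rw [← Equiv.sum_comp (Fin.consEquiv (fun _ => γ)), Fintype.sum_prod_type]
      have key : ∀ (x : γ) (ζ : Fin n → γ),
          (∏ i, ν i ((Fin.consEquiv (fun _ => γ)) (x, ζ) i)) *
            g (fun i => h i ((Fin.consEquiv (fun _ => γ)) (x, ζ) i))
          = (ν 0 x * ∏ i, ν i.succ (ζ i)) *
            g (Fin.cons (h 0 x) (fun i => h i.succ (ζ i))) := by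
        intro x ζ
        simp only [Fin.consEquiv_apply]
        congr 1
        · rw [Fin.prod_univ_succ]
          simp [Fin.cons_zero, Fin.cons_succ]
        · congr 1
          funext i
          refine Fin.cases ?_ ?_ i <;> simp [Fin.cons_zero, Fin.cons_succ]
      simp only [key]
      have key2 : ∀ x : γ,
          ∑ ζ : Fin n → γ, (ν 0 x * ∏ i, ν i.succ (ζ i)) *
            g (Fin.cons (h 0 x) (fun i => h i.succ (ζ i)))
          = ν 0 x * ∑ η : Fin n → β,
              (∏ i, ∑ y : γ, (if h i.succ y = η i then ν i.succ y else 0)) *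
                g (Fin.cons (h 0 x) η) := by
        intro x
        calc ∑ ζ : Fin n → γ, (ν 0 x * ∏ i, ν i.succ (ζ i)) *
                g (Fin.cons (h 0 x) (fun i => h i.succ (ζ i)))
            = ν 0 x * ∑ ζ : Fin n → γ, (∏ i, ν i.succ (ζ i)) *
                g (Fin.cons (h 0 x) (fun i => h i.succ (ζ i))) := by
              rw [Finset.mul_sum]; exact Finset.sum_congr rfl (fun ζ _ => by ring)
          _ = _ := congrArg _
              (IH (fun i => ν i.succ) (fun i => h i.succ) (fun η => g (Fin.cons (h 0 x) η)))
      simp only [key2]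
      conv_rhs => rw [← Equiv.sum_comp (Fin.consEquiv (fun _ => β)), Fintype.sum_prod_type]
      have key3 : ∀ (b : β) (η : Fin n → β),
          (∏ i, ∑ x : γ, (if h i x = (Fin.consEquiv (fun _ => β)) (b, η) i then ν i x else 0)) *
            g (fun i => (Fin.consEquiv (fun _ => β)) (b, η) i)
          = (∑ x : γ, if h 0 x = b then ν 0 x else 0) *
            ((∏ i, ∑ x : γ, (if h i.succ x = η i then ν i.succ x else 0)) * g (Fin.cons b η)) := by
        intro b η
        simp only [Fin.consEquiv_apply]
        rw [Fin.prod_univ_succ]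
        simp only [Fin.cons_zero, Fin.cons_succ]
        rw [mul_assoc]
      simp only [key3]
      have key4 : ∀ b : β,
          ∑ η : Fin n → β, (∑ x : γ, if h 0 x = b then ν 0 x else 0) *
            ((∏ i, ∑ x : γ, (if h i.succ x = η i then ν i.succ x else 0)) * g (Fin.cons b η))
          = (∑ x : γ, if h 0 x = b then ν 0 x else 0) *
            ∑ η : Fin n → β, (∏ i, ∑ x : γ, (if h i.succ x = η i then ν i.succ x else 0)) *
              g (Fin.cons b η) := by
        intro b
        rw [Finset.mul_sum]
      simp only [key4]
      have key5 : ∀ x : γ,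
          ∑ b : β, (if h 0 x = b then ν 0 x else 0) *
              (∑ η : Fin n → β, (∏ i, ∑ y : γ, (if h i.succ y = η i then ν i.succ y else 0)) *
                g (Fin.cons b η))
          = ν 0 x * ∑ η : Fin n → β,
              (∏ i, ∑ y : γ, (if h i.succ y = η i then ν i.succ y else 0)) *
                g (Fin.cons (h 0 x) η) := by
        intro x
        rw [Finset.sum_eq_single (h 0 x)]
        · rw [if_pos rfl]
        · intro b _ hb
          rw [if_neg (fun e => hb e.symm), zero_mul]
        · intro hx; exact absurd (Finset.mem_univ _) hx
      simp only [Finset.sum_mul]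
      rw [Finset.sum_comm]
      exact Finset.sum_congr rfl (fun x _ => (key5 x).symm)


lemma mass {n : ℕ} (ν : Fin n → γ → ℝ) (hν1 : ∀ j, ∑ x : γ, ν j x = 1) :
    ∑ ζ : Fin n → γ, ∏ j, ν j (ζ j) = 1 := by
  have h := sum_pi_push (β := Unit) ν (fun _ _ => ()) (fun _ => 1)
  simp only [mul_one] at h
  rw [h, Fintype.sum_subsingleton _ (fun _ : Fin n => ())]
  simp only [eq_iff_true_of_subsingleton, if_true]
  rw [Finset.prod_congr rfl (fun i _ => hν1 i), Finset.prod_const_one]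

lemma E_split {n : ℕ} [Inhabited γ] (ν : Fin n → γ → ℝ) (hν1 : ∀ j, ∑ x : γ, ν j x = 1)
    (i : Fin n) (φ : γ → ℝ) (ψ : (Fin n → γ) → ℝ)
    (hψ : ∀ ζ x, ψ (Function.update ζ i x) = ψ ζ) :
    ∑ ζ : Fin n → γ, (∏ j, ν j (ζ j)) * (φ (ζ i) * ψ ζ)
      = (∑ x : γ, ν i x * φ x) * (∑ ζ : Fin n → γ, (∏ j, ν j (ζ j)) * ψ ζ) := by
  classical
  set e := Equiv.funSplitAt i γ with he
  have hsymm : ∀ (x : γ) (ρ : {j // j ≠ i} → γ) (j : Fin n),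
      e.symm (x, ρ) j = if h : j = i then x else ρ ⟨j, h⟩ := by
    intro x ρ j
    simp [he, Equiv.funSplitAt, Equiv.piSplitAt]
  have hat : ∀ (x : γ) (ρ : {j // j ≠ i} → γ), e.symm (x, ρ) i = x := by
    intro x ρ; rw [hsymm]; simp
  have hne : ∀ (x : γ) (ρ : {j // j ≠ i} → γ) (j : {j // j ≠ i}),
      e.symm (x, ρ) j = ρ j := by
    intro x ρ j; rw [hsymm]; simp [j.2]
  have hprod : ∀ (x : γ) (ρ : {j // j ≠ i} → γ),
      (∏ j, ν j (e.symm (x, ρ) j)) = ν i x * ∏ j : {j // j ≠ i}, ν (j : Fin n) (ρ j) := by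
    intro x ρ
    rw [← Finset.mul_prod_erase Finset.univ _ (Finset.mem_univ i), hat]
    congr 1
    rw [Finset.prod_subtype (Finset.univ.erase i)
      (fun j => by simp [Finset.mem_erase] : ∀ j : Fin n, j ∈ Finset.univ.erase i ↔ j ≠ i)
      (fun j => ν j (e.symm (x, ρ) j))]
    exact Finset.prod_congr rfl (fun j _ => by rw [hne])
  have hpsi : ∀ (x : γ) (ρ : {j // j ≠ i} → γ),
      ψ (e.symm (x, ρ)) = ψ (e.symm (default, ρ)) := by
    intro x ρ
    have : e.symm (x, ρ) = Function.update (e.symm (default, ρ)) i x := by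
      funext j
      by_cases h : j = i
      · subst h; rw [hat, Function.update_self]
      · rw [hsymm, dif_neg h, Function.update_of_ne h, hsymm, dif_neg h]
    rw [this, hψ]
  have hright : ∑ ζ : Fin n → γ, (∏ j, ν j (ζ j)) * ψ ζ
      = ∑ ρ : {j // j ≠ i} → γ,
          (∏ j : {j // j ≠ i}, ν (j : Fin n) (ρ j)) * ψ (e.symm (default, ρ)) := by
    calc ∑ ζ : Fin n → γ, (∏ j, ν j (ζ j)) * ψ ζ
        = ∑ z : γ × ({j // j ≠ i} → γ), (∏ j, ν j (e.symm z j)) * ψ (e.symm z) :=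
          (Equiv.sum_comp e.symm _).symm
      _ = ∑ x : γ, ∑ ρ : {j // j ≠ i} → γ,
            ν i x * ((∏ j : {j // j ≠ i}, ν (j : Fin n) (ρ j)) * ψ (e.symm (default, ρ))) := by
          rw [Fintype.sum_prod_type]
          exact Finset.sum_congr rfl (fun x _ => Finset.sum_congr rfl (fun ρ _ => by
            rw [hprod, hpsi]; ring))
      _ = (∑ x : γ, ν i x) * ∑ ρ : {j // j ≠ i} → γ,
            (∏ j : {j // j ≠ i}, ν (j : Fin n) (ρ j)) * ψ (e.symm (default, ρ)) := by
          rw [Finset.sum_mul_sum]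
      _ = _ := by rw [hν1 i, one_mul]
  have hleft : ∑ ζ : Fin n → γ, (∏ j, ν j (ζ j)) * (φ (ζ i) * ψ ζ)
      = (∑ x : γ, ν i x * φ x) * (∑ ρ : {j // j ≠ i} → γ,
          (∏ j : {j // j ≠ i}, ν (j : Fin n) (ρ j)) * ψ (e.symm (default, ρ))) := by
    calc ∑ ζ : Fin n → γ, (∏ j, ν j (ζ j)) * (φ (ζ i) * ψ ζ)
        = ∑ z : γ × ({j // j ≠ i} → γ),
            (∏ j, ν j (e.symm z j)) * (φ (e.symm z i) * ψ (e.symm z)) :=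
          (Equiv.sum_comp e.symm _).symm
      _ = ∑ x : γ, ∑ ρ : {j // j ≠ i} → γ,
            (ν i x * φ x) * ((∏ j : {j // j ≠ i}, ν (j : Fin n) (ρ j)) * ψ (e.symm (default, ρ))) := by
          rw [Fintype.sum_prod_type]
          exact Finset.sum_congr rfl (fun x _ => Finset.sum_congr rfl (fun ρ _ => by
            rw [hprod, hat, hpsi]; ring))
      _ = _ := by rw [Finset.sum_mul_sum]
  rw [hleft, hright]

lemma E_one {n : ℕ} [Inhabited γ] (ν : Fin n → γ → ℝ) (hν1 : ∀ j, ∑ x : γ, ν j x = 1)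
    (i : Fin n) (φ : γ → ℝ) :
    ∑ ζ : Fin n → γ, (∏ j, ν j (ζ j)) * φ (ζ i) = ∑ x : γ, ν i x * φ x := by
  have h := E_split ν hν1 i φ (fun _ => 1) (fun _ _ => rfl)
  simp only [mul_one] at h
  rw [h, mass ν hν1, mul_one]

lemma E_pair {n : ℕ} [Inhabited γ] (ν : Fin n → γ → ℝ) (hν1 : ∀ j, ∑ x : γ, ν j x = 1)
    (i j : Fin n) (hij : i ≠ j) (φ ψ : γ → ℝ) :
    ∑ ζ : Fin n → γ, (∏ k, ν k (ζ k)) * (φ (ζ i) * ψ (ζ j))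
      = (∑ x : γ, ν i x * φ x) * (∑ x : γ, ν j x * ψ x) := by
  have h := E_split ν hν1 i φ (fun ζ => ψ (ζ j))
    (fun ζ x => congrArg ψ (Function.update_of_ne (Ne.symm hij) x ζ))
  rw [h, E_one ν hν1 j ψ]



lemma tv_nonneg {Ω : Type*} [Fintype Ω] (P Q : Ω → ℝ) : 0 ≤ tv P Q :=
  mul_nonneg (by norm_num) (Finset.sum_nonneg fun ω _ => abs_nonneg _)

lemma tv_comm {Ω : Type*} [Fintype Ω] (P Q : Ω → ℝ) : tv P Q = tv Q P := by
  unfold tv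
  congr 1
  exact Finset.sum_congr rfl fun ω _ => abs_sub_comm _ _

lemma sub_le_tv {Ω : Type*} [Fintype Ω] (P Q : Ω → ℝ)
    (hP0 : ∀ ω, 0 ≤ P ω) (hQ0 : ∀ ω, 0 ≤ Q ω)
    (hPs : ∑ ω, P ω = 1) (hQs : ∑ ω, Q ω = 1)
    (f : Ω → ℝ) (hf0 : ∀ ω, 0 ≤ f ω) (hf1 : ∀ ω, f ω ≤ 1) :
    (∑ ω, Q ω * f ω) - (∑ ω, P ω * f ω) ≤ tv P Q := by
  have key : ∀ ω, Q ω * f ω - P ω * f ω ≤ (|P ω - Q ω| + (Q ω - P ω))/2 := by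
    intro ω
    rcases le_or_gt (P ω) (Q ω) with h | h
    · rw [abs_sub_comm, abs_of_nonneg (by linarith)]
      nlinarith [hf1 ω, hf0 ω]
    · rw [abs_sub_comm, abs_of_neg (by linarith)]
      nlinarith [hf0 ω]
  calc (∑ ω, Q ω * f ω) - (∑ ω, P ω * f ω) = ∑ ω, (Q ω * f ω - P ω * f ω) :=
        (Finset.sum_sub_distrib _ _).symm
    _ ≤ ∑ ω, (|P ω - Q ω| + (Q ω - P ω))/2 := Finset.sum_le_sum (fun ω _ => key ω)
    _ = ((∑ ω, |P ω - Q ω|) + ((∑ ω, Q ω) - (∑ ω, P ω)))/2 := by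
        rw [← Finset.sum_div, Finset.sum_add_distrib, Finset.sum_sub_distrib]
    _ = tv P Q := by rw [hPs, hQs]; unfold tv; ring


section Main

variable {n : ℕ} (p q : Fin n → ℝ) (S : Finset (Fin n))

def χB (b : Bool) : ℝ := if b then 1 else 0

lemma χB_nonneg (b : Bool) : 0 ≤ χB b := by cases b <;> simp [χB]

noncomputable def berw (t : ℝ) (b : Bool) : ℝ := if b then t else 1 - t

noncomputable def wF (i : Fin n) : ℝ := if i ∈ S then q i - p i else 0

noncomputable def rF (i : Fin n) : ℝ := if i ∈ S then (q i - p i) / (1 - p i) else q i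

noncomputable def νF (i : Fin n) : Bool × Bool → ℝ :=
  fun g => berw (p i) g.1 * berw (rF p q S i) g.2

noncomputable def μF (ζ : Fin n → Bool × Bool) : ℝ := ∏ i, νF p q S i (ζ i)

noncomputable def DD : ℝ := ∑ i, (wF p q S i)^2

noncomputable def bloc : Bool × Bool → ℝ := fun g => if (!g.1 && g.2) then 1 else 0

lemma bloc_nonneg (g : Bool × Bool) : 0 ≤ bloc g := by
  rcases g with ⟨a, b⟩; cases a <;> cases b <;> simp [bloc]

noncomputable def TT (ζ : Fin n → Bool × Bool) : ℝ := ∑ i, wF p q S i * bloc (ζ i)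

noncomputable def SX (ζ : Fin n → Bool × Bool) : ℝ := ∑ i, wF p q S i * χB (ζ i).1

noncomputable def StF (η : Fin n → Bool) : ℝ := ∑ i, wF p q S i * χB (η i)

noncomputable def muX : ℝ := ∑ i, wF p q S i * p i

noncomputable def clF (i : Fin n) : Bool × Bool → ℝ := fun g => χB g.1 - p i

noncomputable def RF (i : Fin n) (ζ : Fin n → Bool × Bool) : ℝ :=
  ∑ j, if j = i then 0 else wF p q S j * clF p j (ζ j)

noncomputable def eF (i : Fin n) : ℝ := (1 - p i) * rF p q S i

def Yfun (ζ : Fin n → Bool × Bool) : Fin n → Bool :=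
  fun i => if i ∈ S then ((ζ i).1 || (ζ i).2) else (ζ i).2

variable (hp : ∀ i, p i ∈ Set.Icc (0:ℝ) 1) (hq : ∀ i, q i ∈ Set.Icc (0:ℝ) 1)
  (hmono : ∀ i ∈ S, p i ≤ q i)

section Facts
include hp hq hmono

lemma L_w0 : ∀ i, 0 ≤ wF p q S i := by
  intro i
  unfold wF
  split_ifs with h
  · linarith [hmono i h]
  · exact le_refl 0

lemma L_d : ∀ i ∈ S, (1 - p i) * rF p q S i = q i - p i := by
  intro i hi
  unfold rF
  rw [if_pos hi]
  by_cases h1 : (1 : ℝ) - p i = 0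
  · have hq1 : q i = 1 := le_antisymm (hq i).2 (by linarith [hmono i hi])
    rw [h1, zero_mul]
    linarith
  · field_simp

lemma L_r01 : ∀ i, 0 ≤ rF p q S i ∧ rF p q S i ≤ 1 := by
  intro i
  unfold rF
  split_ifs with h
  · by_cases h1 : (1 : ℝ) - p i = 0
    · rw [h1, div_zero]; norm_num
    · have hp1 : p i < 1 := lt_of_le_of_ne (hp i).2 (by intro e; exact h1 (by rw [e]; ring))
      constructor
      · exact div_nonneg (by linarith [hmono i h]) (by linarith)
      · rw [div_le_one (by linarith)]
        linarith [(hq i).2]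
  · exact ⟨(hq i).1, (hq i).2⟩

lemma L_ν1 : ∀ i, ∑ g : Bool × Bool, νF p q S i g = 1 := by
  intro i
  rw [Fintype.sum_prod_type]
  simp [νF, berw, Fintype.sum_bool]
  ring

lemma L_ν0 : ∀ i g, 0 ≤ νF p q S i g := by
  intro i g
  rcases g with ⟨a, b⟩
  have h1 := (hp i).1
  have h2 := (hp i).2
  have h3 := (L_r01 p q S hp hq hmono i).1
  have h4 := (L_r01 p q S hp hq hmono i).2
  cases a <;> cases b <;> simp [νF, berw] <;> nlinarith

lemma L_μ0 : ∀ ζ, 0 ≤ μF p q S ζ := by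
  intro ζ
  exact Finset.prod_nonneg fun i _ => L_ν0 p q S hp hq hmono i (ζ i)

lemma L_e01 : ∀ i, 0 ≤ eF p q S i ∧ eF p q S i ≤ 1 := by
  intro i
  have h1 := (hp i).1
  have h2 := (hp i).2
  have h3 := (L_r01 p q S hp hq hmono i).1
  have h4 := (L_r01 p q S hp hq hmono i).2
  unfold eF
  constructor
  · nlinarith
  · nlinarith

lemma L_we : ∀ i, wF p q S i * eF p q S i = (wF p q S i)^2 := by
  intro i
  by_cases h : i ∈ S
  · have := L_d p q S hp hq hmono i h
    unfold eF wF
    rw [if_pos h, this]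
    ring
  · unfold wF
    rw [if_neg h]
    ring

lemma L_mB : ∀ i, ∑ g : Bool × Bool, νF p q S i g * bloc g = eF p q S i := by
  intro i
  rw [Fintype.sum_prod_type]
  simp [νF, berw, bloc, eF, Fintype.sum_bool]

lemma L_m0 : ∀ i, ∑ g : Bool × Bool, νF p q S i g * clF p i g = 0 := by
  intro i
  rw [Fintype.sum_prod_type]
  simp [νF, berw, clF, χB, Fintype.sum_bool]
  ring

lemma L_m2 : ∀ i, ∑ g : Bool × Bool, νF p q S i g * (clF p i g)^2 = p i * (1 - p i) := by
  intro i
  rw [Fintype.sum_prod_type]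
  simp [νF, berw, clF, χB, Fintype.sum_bool]
  ring

lemma L_kX : ∀ (i : Fin n) (b : Bool),
    (∑ x : Bool × Bool, if x.1 = b then νF p q S i x else 0) = berw (p i) b := by
  intro i b
  rw [Fintype.sum_prod_type]
  cases b <;> simp [νF, berw, Fintype.sum_bool] <;> ring

lemma L_kY : ∀ (i : Fin n) (b : Bool),
    (∑ x : Bool × Bool, if (if i ∈ S then (x.1 || x.2) else x.2) = b
      then νF p q S i x else 0) = berw (q i) b := by
  intro i b
  by_cases hi : i ∈ S
  · have hd := L_d p q S hp hq hmono i hi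
    rw [Fintype.sum_prod_type]
    cases b
    · simp [hi, νF, berw, Fintype.sum_bool]
      linarith [hd]
    · simp [hi, νF, berw, Fintype.sum_bool]
      linarith [hd]
  · rw [Fintype.sum_prod_type]
    cases b <;> simp [hi, νF, berw, rF, Fintype.sum_bool] <;> ring

lemma L_margX (f : (Fin n → Bool) → ℝ) :
    ∑ ζ : Fin n → Bool × Bool, μF p q S ζ * f (fun i => (ζ i).1)
      = ∑ η : Fin n → Bool, berProd p η * f η := by
  have h := sum_pi_push (νF p q S) (fun _ g => g.1) f
  unfold μF
  rw [h]
  refine Finset.sum_congr rfl (fun η _ => ?_)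
  congr 1
  rw [Finset.prod_congr rfl (fun i _ => L_kX p q S hp hq hmono i (η i))]
  rfl

lemma L_margY (f : (Fin n → Bool) → ℝ) :
    ∑ ζ : Fin n → Bool × Bool, μF p q S ζ * f (Yfun S ζ)
      = ∑ η : Fin n → Bool, berProd q η * f η := by
  have h := sum_pi_push (νF p q S) (fun i g => if i ∈ S then (g.1 || g.2) else g.2) f
  unfold μF Yfun
  rw [h]
  refine Finset.sum_congr rfl (fun η _ => ?_)
  congr 1
  rw [Finset.prod_congr rfl (fun i _ => L_kY p q S hp hq hmono i (η i))]
  rfl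

lemma L_bermass_p : ∑ η : Fin n → Bool, berProd p η = 1 := by
  have h1 := mass (νF p q S) (L_ν1 p q S hp hq hmono)
  have h2 := L_margX p q S hp hq hmono (fun _ => (1:ℝ))
  simp only [mul_one] at h2
  unfold μF at h2
  rw [← h2, h1]

lemma L_bermass_q : ∑ η : Fin n → Bool, berProd q η = 1 := by
  have h1 := mass (νF p q S) (L_ν1 p q S hp hq hmono)
  have h2 := L_margY p q S hp hq hmono (fun _ => (1:ℝ))
  simp only [mul_one] at h2
  unfold μF at h2
  rw [← h2, h1]

lemma L_ew : ∀ i ∈ S, eF p q S i = wF p q S i := by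
  intro i hi
  unfold eF wF
  rw [if_pos hi, L_d p q S hp hq hmono i hi]

lemma L_ET : ∑ ζ : Fin n → Bool × Bool, μF p q S ζ * TT p q S ζ = DD p q S := by
  have h1 : ∀ ζ, μF p q S ζ * TT p q S ζ
      = ∑ i, wF p q S i * (μF p q S ζ * bloc (ζ i)) := by
    intro ζ; unfold TT; rw [Finset.mul_sum]; exact Finset.sum_congr rfl fun i _ => by ring
  rw [Finset.sum_congr rfl fun ζ _ => h1 ζ, Finset.sum_comm]
  have h2 : ∀ i, (∑ ζ : Fin n → Bool × Bool, wF p q S i * (μF p q S ζ * bloc (ζ i)))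
      = (wF p q S i)^2 := by
    intro i
    rw [← Finset.mul_sum]
    have h3 : ∑ ζ : Fin n → Bool × Bool, μF p q S ζ * bloc (ζ i) = eF p q S i := by
      unfold μF
      rw [E_one (νF p q S) (L_ν1 p q S hp hq hmono) i bloc]
      exact L_mB p q S hp hq hmono i
    rw [h3]
    exact L_we p q S hp hq hmono i
  rw [Finset.sum_congr rfl fun i _ => h2 i]
  rfl

lemma L_Ebb : ∀ i j, ∑ ζ : Fin n → Bool × Bool, μF p q S ζ * (bloc (ζ i) * bloc (ζ j))
    = if i = j then eF p q S i else eF p q S i * eF p q S j := by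
  intro i j
  by_cases hij : i = j
  · subst hij
    rw [if_pos rfl]
    have hb : ∀ g : Bool × Bool, bloc g * bloc g = bloc g := by
      rintro ⟨a, b⟩; cases a <;> cases b <;> simp [bloc]
    rw [Finset.sum_congr rfl fun ζ _ => by rw [hb (ζ i)]]
    unfold μF
    rw [E_one (νF p q S) (L_ν1 p q S hp hq hmono) i bloc]
    exact L_mB p q S hp hq hmono i
  · rw [if_neg hij]
    unfold μF
    rw [E_pair (νF p q S) (L_ν1 p q S hp hq hmono) i j hij bloc bloc,
      L_mB p q S hp hq hmono i, L_mB p q S hp hq hmono j]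

lemma L_ET2 : ∑ ζ : Fin n → Bool × Bool, μF p q S ζ * (TT p q S ζ)^2
    = (DD p q S)^2
      + ∑ i, ((wF p q S i)^2 * eF p q S i - (wF p q S i)^2 * (eF p q S i)^2) := by
  have h1 : ∀ ζ, μF p q S ζ * (TT p q S ζ)^2
      = ∑ i, ∑ j, (wF p q S i * wF p q S j) * (μF p q S ζ * (bloc (ζ i) * bloc (ζ j))) := by
    intro ζ
    unfold TT
    rw [sq, Finset.sum_mul_sum, Finset.mul_sum]
    refine Finset.sum_congr rfl (fun i _ => ?_)
    rw [Finset.mul_sum]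
    exact Finset.sum_congr rfl (fun j _ => by ring)
  rw [Finset.sum_congr rfl fun ζ _ => h1 ζ, Finset.sum_comm]
  have h2 : ∀ i, (∑ ζ : Fin n → Bool × Bool, ∑ j,
        (wF p q S i * wF p q S j) * (μF p q S ζ * (bloc (ζ i) * bloc (ζ j))))
      = ∑ j, (wF p q S i * wF p q S j) *
          (if i = j then eF p q S i else eF p q S i * eF p q S j) := by
    intro i
    rw [Finset.sum_comm]
    refine Finset.sum_congr rfl (fun j _ => ?_)
    rw [← Finset.mul_sum, L_Ebb p q S hp hq hmono i j]
  rw [Finset.sum_congr rfl fun i _ => h2 i]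
  have h3 : ∀ i, (∑ j, (wF p q S i * wF p q S j) *
        (if i = j then eF p q S i else eF p q S i * eF p q S j))
      = (∑ j, (wF p q S i * eF p q S i) * (wF p q S j * eF p q S j))
        + ((wF p q S i)^2 * eF p q S i - (wF p q S i)^2 * (eF p q S i)^2) := by
    intro i
    have h4 : ∀ j, (wF p q S i * wF p q S j) *
          (if i = j then eF p q S i else eF p q S i * eF p q S j)
        = (wF p q S i * eF p q S i) * (wF p q S j * eF p q S j)
          + (if i = j then (wF p q S i)^2 * eF p q S i - (wF p q S i)^2 * (eF p q S i)^2
             else 0) := by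
      intro j
      by_cases hij : i = j
      · subst hij; rw [if_pos rfl, if_pos rfl]; ring
      · rw [if_neg hij, if_neg hij]; ring
    rw [Finset.sum_congr rfl fun j _ => h4 j, Finset.sum_add_distrib, Finset.sum_ite_eq]
    rw [if_pos (Finset.mem_univ i)]
  rw [Finset.sum_congr rfl fun i _ => h3 i, Finset.sum_add_distrib]
  congr 1
  have hWE : ∑ i, wF p q S i * eF p q S i = DD p q S :=
    Finset.sum_congr rfl fun i _ => L_we p q S hp hq hmono i
  rw [sq (DD p q S), ← hWE, Finset.sum_mul_sum]

lemma L_Ecc : ∀ j k, ∑ ζ : Fin n → Bool × Bool,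
      μF p q S ζ * (clF p j (ζ j) * clF p k (ζ k))
    = if j = k then p j * (1 - p j) else 0 := by
  intro j k
  by_cases hjk : j = k
  · subst hjk
    rw [if_pos rfl]
    unfold μF
    rw [E_one (νF p q S) (L_ν1 p q S hp hq hmono) j (fun g => clF p j g * clF p j g)]
    have := L_m2 p q S hp hq hmono j
    rw [← this]
    exact Finset.sum_congr rfl fun g _ => by rw [sq]
  · rw [if_neg hjk]
    unfold μF
    rw [E_pair (νF p q S) (L_ν1 p q S hp hq hmono) j k hjk (clF p j) (clF p k),
      L_m0 p q S hp hq hmono j, zero_mul]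

lemma L_Rupd : ∀ (i : Fin n) ζ x, RF p q S i (Function.update ζ i x) = RF p q S i ζ := by
  intro i ζ x
  unfold RF
  refine Finset.sum_congr rfl (fun j _ => ?_)
  by_cases hj : j = i
  · rw [if_pos hj, if_pos hj]
  · rw [if_neg hj, if_neg hj, Function.update_of_ne hj]

lemma L_ER2 : ∀ i, ∑ ζ : Fin n → Bool × Bool, μF p q S ζ * (RF p q S i ζ)^2
    = ∑ j, (if j = i then 0 else (wF p q S j)^2 * (p j * (1 - p j))) := by
  intro i
  have h1 : ∀ ζ, μF p q S ζ * (RF p q S i ζ)^2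
      = ∑ j, ∑ k, ((if j = i then 0 else wF p q S j) * (if k = i then 0 else wF p q S k)) *
          (μF p q S ζ * (clF p j (ζ j) * clF p k (ζ k))) := by
    intro ζ
    have hRe : RF p q S i ζ = ∑ j, (if j = i then 0 else wF p q S j) * clF p j (ζ j) := by
      unfold RF
      refine Finset.sum_congr rfl (fun j _ => ?_)
      by_cases hj : j = i
      · rw [if_pos hj, if_pos hj, zero_mul]
      · rw [if_neg hj, if_neg hj]
    rw [hRe, sq, Finset.sum_mul_sum, Finset.mul_sum]
    refine Finset.sum_congr rfl (fun j _ => ?_)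
    rw [Finset.mul_sum]
    exact Finset.sum_congr rfl (fun k _ => by ring)
  rw [Finset.sum_congr rfl fun ζ _ => h1 ζ, Finset.sum_comm]
  have h2 : ∀ j, (∑ ζ : Fin n → Bool × Bool, ∑ k,
        ((if j = i then 0 else wF p q S j) * (if k = i then 0 else wF p q S k)) *
          (μF p q S ζ * (clF p j (ζ j) * clF p k (ζ k))))
      = (if j = i then 0 else (wF p q S j)^2 * (p j * (1 - p j))) := by
    intro j
    rw [Finset.sum_comm]
    have h3 : ∀ k, (∑ ζ : Fin n → Bool × Bool,
          ((if j = i then 0 else wF p q S j) * (if k = i then 0 else wF p q S k)) *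
            (μF p q S ζ * (clF p j (ζ j) * clF p k (ζ k))))
        = ((if j = i then 0 else wF p q S j) * (if k = i then 0 else wF p q S k)) *
            (if j = k then p j * (1 - p j) else 0) := by
      intro k
      rw [← Finset.mul_sum, L_Ecc p q S hp hq hmono j k]
    rw [Finset.sum_congr rfl fun k _ => h3 k]
    have h4 : ∀ k, ((if j = i then 0 else wF p q S j) * (if k = i then 0 else wF p q S k)) *
          (if j = k then p j * (1 - p j) else 0)
        = if j = k then ((if j = i then 0 else wF p q S j) *
            (if k = i then 0 else wF p q S k)) * (p j * (1 - p j)) else 0 := by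
      intro k
      by_cases hjk : j = k
      · rw [if_pos hjk, if_pos hjk]
      · rw [if_neg hjk, if_neg hjk, mul_zero]
    rw [Finset.sum_congr rfl fun k _ => h4 k, Finset.sum_ite_eq, if_pos (Finset.mem_univ j)]
    by_cases hj : j = i
    · rw [if_pos hj, if_pos hj]
      ring
    · rw [if_neg hj, if_neg hj]
      ring
  rw [Finset.sum_congr rfl fun j _ => h2 j]

lemma L_EbR : ∀ i, ∑ ζ : Fin n → Bool × Bool,
      μF p q S ζ * (bloc (ζ i) * (RF p q S i ζ)^2)
    = eF p q S i * ∑ ζ : Fin n → Bool × Bool, μF p q S ζ * (RF p q S i ζ)^2 := by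
  intro i
  unfold μF
  rw [E_split (νF p q S) (L_ν1 p q S hp hq hmono) i bloc (fun ζ => (RF p q S i ζ)^2)
    (fun ζ x => by
      show (RF p q S i (Function.update ζ i x))^2 = (RF p q S i ζ)^2
      rw [L_Rupd p q S hp hq hmono i ζ x])]
  rw [L_mB p q S hp hq hmono i]

lemma L_SXT : ∀ ζ, SX p q S ζ + TT p q S ζ = StF p q S (Yfun S ζ) := by
  intro ζ
  unfold SX TT StF Yfun
  rw [← Finset.sum_add_distrib]
  refine Finset.sum_congr rfl (fun i _ => ?_)
  by_cases hi : i ∈ S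
  · rw [if_pos hi]
    rcases ζ i with ⟨a, b⟩
    cases a <;> cases b <;> simp [χB, bloc] <;> ring
  · have hw : wF p q S i = 0 := by unfold wF; rw [if_neg hi]
    rw [if_neg hi, hw]
    ring

lemma L_Rrep : ∀ (i : Fin n) ζ, RF p q S i ζ
    = SX p q S ζ - muX p q S - wF p q S i * clF p i (ζ i) := by
  intro i ζ
  have h1 : ∑ j, (wF p q S j * clF p j (ζ j))
      = SX p q S ζ - muX p q S := by
    unfold SX muX clF
    rw [← Finset.sum_sub_distrib]
    exact Finset.sum_congr rfl (fun j _ => by ring)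
  have h2 : RF p q S i ζ
      = (∑ j, (wF p q S j * clF p j (ζ j))) - wF p q S i * clF p i (ζ i) := by
    unfold RF
    rw [eq_sub_iff_add_eq, ← Fintype.sum_ite_eq' i
      (fun j => wF p q S j * clF p j (ζ j)), ← Finset.sum_add_distrib]
    refine Finset.sum_congr rfl (fun j _ => ?_)
    by_cases hj : j = i
    · rw [if_pos hj, if_pos hj, zero_add]
    · rw [if_neg hj, if_neg hj, add_zero]
  rw [h2, h1]

lemma L_T0 : ∀ ζ, 0 ≤ TT p q S ζ := by
  intro ζ
  refine Finset.sum_nonneg fun i _ => ?_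
  exact mul_nonneg (L_w0 p q S hp hq hmono i) (bloc_nonneg (ζ i))

lemma L_clb : ∀ (i : Fin n) (g : Bool × Bool), -1 ≤ clF p i g ∧ clF p i g ≤ 1 := by
  intro i g
  have h1 := (hp i).1
  have h2 := (hp i).2
  unfold clF
  cases g.1 <;> simp [χB] <;> constructor <;> linarith

lemma L_ER2le : ∀ i, ∑ ζ : Fin n → Bool × Bool, μF p q S ζ * (RF p q S i ζ)^2
    ≤ DD p q S / 4 := by
  intro i
  rw [L_ER2 p q S hp hq hmono i]
  have h1 : ∀ j, (if j = i then 0 else (wF p q S j)^2 * (p j * (1 - p j)))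
      ≤ (wF p q S j)^2 / 4 := by
    intro j
    have h2 := (hp j).1
    have h3 := (hp j).2
    by_cases hj : j = i
    · rw [if_pos hj]; positivity
    · rw [if_neg hj]
      nlinarith [sq_nonneg (wF p q S j), sq_nonneg (1 - 2 * p j)]
  calc ∑ j, (if j = i then 0 else (wF p q S j)^2 * (p j * (1 - p j)))
      ≤ ∑ j, (wF p q S j)^2 / 4 := Finset.sum_le_sum fun j _ => h1 j
    _ = DD p q S / 4 := by rw [← Finset.sum_div]; rfl

lemma L_cheb (s2 : ℝ) (hs2pos : 0 < s2)
    (C : (Fin n → Bool × Bool) → Prop) [DecidablePred C]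
    (hR : ∀ ζ i, C ζ → s2 ≤ (RF p q S i ζ)^2) :
    ∑ ζ : Fin n → Bool × Bool, μF p q S ζ * (if C ζ then TT p q S ζ else 0)
      ≤ (DD p q S)^2 / (4 * s2) := by
  have step1 : ∀ ζ, μF p q S ζ * (if C ζ then TT p q S ζ else 0)
      ≤ μF p q S ζ * ∑ i, (wF p q S i / s2) * (bloc (ζ i) * (RF p q S i ζ)^2) := by
    intro ζ
    refine mul_le_mul_of_nonneg_left ?_ (L_μ0 p q S hp hq hmono ζ)
    by_cases hC : C ζ
    · rw [if_pos hC]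
      unfold TT
      refine Finset.sum_le_sum fun i _ => ?_
      have hw := L_w0 p q S hp hq hmono i
      have hb := bloc_nonneg (ζ i)
      have hRi := hR ζ i hC
      have h6 : wF p q S i / s2 * (bloc (ζ i) * RF p q S i ζ ^ 2)
          = (wF p q S i * (bloc (ζ i) * RF p q S i ζ ^ 2)) / s2 := by ring
      rw [h6, le_div_iff₀ hs2pos]
      nlinarith [mul_nonneg hw hb, sub_nonneg.mpr hRi,
        mul_nonneg (mul_nonneg hw hb) (sub_nonneg.mpr hRi)]
    · rw [if_neg hC]
      refine Finset.sum_nonneg fun i _ => ?_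
      have hw := L_w0 p q S hp hq hmono i
      have hb := bloc_nonneg (ζ i)
      have hRsq := sq_nonneg (RF p q S i ζ)
      positivity
  calc ∑ ζ : Fin n → Bool × Bool, μF p q S ζ * (if C ζ then TT p q S ζ else 0)
      ≤ ∑ ζ : Fin n → Bool × Bool, μF p q S ζ *
          ∑ i, (wF p q S i / s2) * (bloc (ζ i) * (RF p q S i ζ)^2) :=
        Finset.sum_le_sum fun ζ _ => step1 ζ
    _ = ∑ i, (wF p q S i / s2) *
          ∑ ζ : Fin n → Bool × Bool, μF p q S ζ * (bloc (ζ i) * (RF p q S i ζ)^2) := by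
        calc ∑ ζ : Fin n → Bool × Bool, μF p q S ζ *
                ∑ i, (wF p q S i / s2) * (bloc (ζ i) * (RF p q S i ζ)^2)
            = ∑ ζ : Fin n → Bool × Bool, ∑ i, (wF p q S i / s2) *
                (μF p q S ζ * (bloc (ζ i) * (RF p q S i ζ)^2)) := by
              refine Finset.sum_congr rfl fun ζ _ => ?_
              rw [Finset.mul_sum]
              exact Finset.sum_congr rfl fun i _ => by ring
          _ = ∑ i, ∑ ζ : Fin n → Bool × Bool, (wF p q S i / s2) *
                (μF p q S ζ * (bloc (ζ i) * (RF p q S i ζ)^2)) := Finset.sum_comm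
          _ = ∑ i, (wF p q S i / s2) *
                ∑ ζ : Fin n → Bool × Bool, μF p q S ζ * (bloc (ζ i) * (RF p q S i ζ)^2) := by
              exact Finset.sum_congr rfl fun i _ => by rw [← Finset.mul_sum]
    _ = ∑ i, (wF p q S i / s2) * (eF p q S i *
          ∑ ζ : Fin n → Bool × Bool, μF p q S ζ * (RF p q S i ζ)^2) := by
        exact Finset.sum_congr rfl fun i _ => by rw [L_EbR p q S hp hq hmono i]
    _ ≤ ∑ i, (wF p q S i / s2) * (eF p q S i * (DD p q S / 4)) := by
        refine Finset.sum_le_sum fun i _ => ?_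
        refine mul_le_mul_of_nonneg_left ?_
          (div_nonneg (L_w0 p q S hp hq hmono i) (le_of_lt hs2pos))
        exact mul_le_mul_of_nonneg_left (L_ER2le p q S hp hq hmono i)
          (L_e01 p q S hp hq hmono i).1
    _ = (DD p q S)^2 / (4 * s2) := by
        have h5 : ∀ i, (wF p q S i / s2) * (eF p q S i * (DD p q S / 4))
            = (wF p q S i * eF p q S i) * (DD p q S / (4 * s2)) := by
          intro i; field_simp
        rw [Finset.sum_congr rfl fun i _ => h5 i, ← Finset.sum_mul]
        rw [Finset.sum_congr rfl fun i _ => L_we p q S hp hq hmono i]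
        rw [show (∑ i, (wF p q S i)^2) = DD p q S from rfl]
        field_simp

lemma L_Tbig (A : ℝ) (hA : 0 < A) :
    ∑ ζ : Fin n → Bool × Bool, μF p q S ζ * (if A < TT p q S ζ then TT p q S ζ else 0)
      ≤ (∑ ζ : Fin n → Bool × Bool, μF p q S ζ * (TT p q S ζ)^2) / A := by
  rw [Finset.sum_div]
  refine Finset.sum_le_sum fun ζ _ => ?_
  rw [mul_div_assoc]
  refine mul_le_mul_of_nonneg_left ?_ (L_μ0 p q S hp hq hmono ζ)
  by_cases hC : A < TT p q S ζ
  · rw [if_pos hC]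
    rw [le_div_iff₀ hA]
    nlinarith [L_T0 p q S hp hq hmono ζ]
  · rw [if_neg hC]
    positivity

lemma L_ber0 : ∀ η, 0 ≤ berProd p η := by
  intro η
  refine Finset.prod_nonneg fun i _ => ?_
  have h1 := (hp i).1
  have h2 := (hp i).2
  cases η i <;> simp <;> linarith

lemma L_ber0q : ∀ η, 0 ≤ berProd q η := by
  intro η
  refine Finset.prod_nonneg fun i _ => ?_
  have h1 := (hq i).1
  have h2 := (hq i).2
  cases η i <;> simp <;> linarith

end Facts


lemma clamp_ineq (a b A u t : ℝ) (ht : 0 ≤ t) (hab : a ≤ b) :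
    t - ((if A < t then t else 0) + (if u < a then t else 0) + (if b - A < u then t else 0))
      ≤ max a (min b (u + t)) - max a (min b u) := by
  have hmono : max a (min b u) ≤ max a (min b (u + t)) :=
    max_le_max (le_refl a) (min_le_min (le_refl b) (by linarith))
  have i1 : (0:ℝ) ≤ if A < t then t else 0 := by split_ifs <;> linarith
  have i2 : (0:ℝ) ≤ if u < a then t else 0 := by split_ifs <;> linarith
  have i3 : (0:ℝ) ≤ if b - A < u then t else 0 := by split_ifs <;> linarith
  by_cases h1 : A < t
  · rw [if_pos h1]; linarith
  rw [if_neg h1]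
  by_cases h2 : u < a
  · rw [if_pos h2]; linarith
  rw [if_neg h2]
  by_cases h3 : b - A < u
  · rw [if_pos h3]; linarith
  rw [if_neg h3]
  push_neg at h1 h2 h3
  have hub : u + t ≤ b := by linarith
  rw [min_eq_right (by linarith : u ≤ b), min_eq_right hub,
    max_eq_right h2, max_eq_right (by linarith : a ≤ u + t)]
  linarith

set_option maxHeartbeats 1000000 in
lemma main_lemma {n : ℕ} (p q : Fin n → ℝ)
    (hp : ∀ i, p i ∈ Set.Icc (0:ℝ) 1) (hq : ∀ i, q i ∈ Set.Icc (0:ℝ) 1)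
    (S : Finset (Fin n)) (hmono : ∀ i ∈ S, p i ≤ q i)
    (hD32 : ∑ i ∈ S, (q i - p i)^2 ≤ 3/2) :
    Real.sqrt (∑ i ∈ S, (q i - p i)^2) / 60 ≤ tv (berProd p) (berProd q) := by
  classical
  have hDD : DD p q S = ∑ i ∈ S, (q i - p i)^2 := by
    unfold DD wF
    have h1 : ∀ i, (if i ∈ S then q i - p i else 0)^2
        = if i ∈ S then (q i - p i)^2 else 0 := by
      intro i; split_ifs <;> simp
    rw [Finset.sum_congr rfl fun i _ => h1 i, Finset.sum_ite_mem, Finset.univ_inter]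
  rw [← hDD] at hD32 ⊢
  have hD0 : 0 ≤ DD p q S := Finset.sum_nonneg fun i _ => sq_nonneg _
  by_cases hD : DD p q S = 0
  · rw [hD, Real.sqrt_zero, zero_div]
    exact tv_nonneg _ _
  have hDpos : 0 < DD p q S := lt_of_le_of_ne hD0 (Ne.symm hD)
  set s : ℝ := Real.sqrt (DD p q S) with hs
  have hs2 : s^2 = DD p q S := Real.sq_sqrt hD0
  have hspos : 0 < s := Real.sqrt_pos.mpr hDpos
  have hsle : s ≤ 5/4 := by
    have h1 : s ≤ Real.sqrt (25/16) := Real.sqrt_le_sqrt (by linarith)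
    have h2 : Real.sqrt (25/16 : ℝ) = 5/4 := by
      rw [show (25/16 : ℝ) = (5/4)^2 by norm_num, Real.sqrt_sq (by norm_num)]
    linarith
  have hwle : ∀ i, wF p q S i ≤ s := by
    intro i
    have h1 : (wF p q S i)^2 ≤ DD p q S :=
      Finset.single_le_sum (f := fun i => (wF p q S i)^2)
        (fun i _ => sq_nonneg _) (Finset.mem_univ i)
    have h2 := L_w0 p q S hp hq hmono i
    nlinarith
  set aa : ℝ := muX p q S - 2*s with haa
  set bb : ℝ := muX p q S + 18*s with hbb
  have hab : aa ≤ bb := by rw [haa, hbb]; linarith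
  set f : (Fin n → Bool) → ℝ :=
    fun η => (max aa (min bb (StF p q S η)) - aa) / (20*s) with hf
  have hf0 : ∀ η, 0 ≤ f η := by
    intro η
    apply div_nonneg _ (by positivity)
    rw [sub_nonneg]
    exact le_max_left _ _
  have hf1 : ∀ η, f η ≤ 1 := by
    intro η
    rw [hf, div_le_one (by positivity)]
    have h1 : max aa (min bb (StF p q S η)) ≤ bb := max_le hab (min_le_left _ _)
    rw [haa, hbb] at h1 ⊢
    linarith
  have hstep1 := sub_le_tv (berProd p) (berProd q)
    (L_ber0 p q S hp hq hmono) (L_ber0q p q S hp hq hmono)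
    (L_bermass_p p q S hp hq hmono) (L_bermass_q p q S hp hq hmono) f hf0 hf1
  rw [← L_margX p q S hp hq hmono f, ← L_margY p q S hp hq hmono f] at hstep1
  -- pointwise bound
  have hpoint : ∀ ζ, μF p q S ζ * (TT p q S ζ
        - ((if 16*s < TT p q S ζ then TT p q S ζ else 0)
          + (if SX p q S ζ < aa then TT p q S ζ else 0)
          + (if bb - 16*s < SX p q S ζ then TT p q S ζ else 0))) / (20*s)
      ≤ μF p q S ζ * f (Yfun S ζ) - μF p q S ζ * f (fun i => (ζ i).1) := by
    intro ζ
    have hT0 := L_T0 p q S hp hq hmono ζ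
    have hclamp := clamp_ineq aa bb (16*s) (SX p q S ζ) (TT p q S ζ) hT0 hab
    have hμ0 := L_μ0 p q S hp hq hmono ζ
    have hY : f (Yfun S ζ)
        = (max aa (min bb (SX p q S ζ + TT p q S ζ)) - aa) / (20*s) := by
      show (max aa (min bb (StF p q S (Yfun S ζ))) - aa) / (20*s) = _
      rw [← L_SXT p q S hp hq hmono ζ]
    have hX : f (fun i => (ζ i).1)
        = (max aa (min bb (SX p q S ζ)) - aa) / (20*s) := rfl
    rw [hY, hX]
    have hkey : μF p q S ζ * (TT p q S ζ
          - ((if 16*s < TT p q S ζ then TT p q S ζ else 0)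
            + (if SX p q S ζ < aa then TT p q S ζ else 0)
            + (if bb - 16*s < SX p q S ζ then TT p q S ζ else 0)))
        ≤ μF p q S ζ * (max aa (min bb (SX p q S ζ + TT p q S ζ))
            - max aa (min bb (SX p q S ζ))) :=
      mul_le_mul_of_nonneg_left hclamp hμ0
    have h20 : (0:ℝ) < 20*s := by positivity
    have e1 : μF p q S ζ * ((max aa (min bb (SX p q S ζ + TT p q S ζ)) - aa) / (20*s))
          - μF p q S ζ * ((max aa (min bb (SX p q S ζ)) - aa) / (20*s))
        = μF p q S ζ * (max aa (min bb (SX p q S ζ + TT p q S ζ))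
            - max aa (min bb (SX p q S ζ))) / (20*s) := by ring
    have e2 : μF p q S ζ * (TT p q S ζ
          - ((if 16*s < TT p q S ζ then TT p q S ζ else 0)
            + (if SX p q S ζ < aa then TT p q S ζ else 0)
            + (if bb - 16*s < SX p q S ζ then TT p q S ζ else 0))) / (20*s)
        ≤ μF p q S ζ * (max aa (min bb (SX p q S ζ + TT p q S ζ))
            - max aa (min bb (SX p q S ζ))) / (20*s) := (div_le_div_iff_of_pos_right h20).mpr hkey
    linarith
  -- second moment bound
  have hT2 : ∑ ζ : Fin n → Bool × Bool, μF p q S ζ * (TT p q S ζ)^2 ≤ s^4 + s^3 := by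
    rw [L_ET2 p q S hp hq hmono]
    have h1 : ∑ i, ((wF p q S i)^2 * eF p q S i - (wF p q S i)^2 * (eF p q S i)^2)
        ≤ s * DD p q S := by
      have h2 : ∀ i, (wF p q S i)^2 * eF p q S i - (wF p q S i)^2 * (eF p q S i)^2
          ≤ s * (wF p q S i)^2 := by
        intro i
        have he0 := (L_e01 p q S hp hq hmono i).1
        have hsq := sq_nonneg (wF p q S i)
        by_cases hi : i ∈ S
        · have hew := L_ew p q S hp hq hmono i hi
          have hwi := hwle i
          have hw0 := L_w0 p q S hp hq hmono i
          rw [hew]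
          nlinarith
        · have hw0 : wF p q S i = 0 := by unfold wF; rw [if_neg hi]
          rw [hw0]
          nlinarith [sq_nonneg (eF p q S i)]
      calc ∑ i, ((wF p q S i)^2 * eF p q S i - (wF p q S i)^2 * (eF p q S i)^2)
          ≤ ∑ i, s * (wF p q S i)^2 := Finset.sum_le_sum fun i _ => h2 i
        _ = s * DD p q S := by rw [← Finset.mul_sum]; rfl
    have hD2 : (DD p q S)^2 = s^4 := by rw [← hs2]; ring
    have hsD : s * DD p q S = s^3 := by rw [← hs2]; ring
    linarith
  have hE1 : ∑ ζ : Fin n → Bool × Bool,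
      μF p q S ζ * (if 16*s < TT p q S ζ then TT p q S ζ else 0) ≤ 9/64 * DD p q S := by
    have h1 := L_Tbig p q S hp hq hmono (16*s) (by positivity)
    have h2 : (∑ ζ : Fin n → Bool × Bool, μF p q S ζ * (TT p q S ζ)^2) / (16*s)
        ≤ (s^4 + s^3)/(16*s) := (div_le_div_iff_of_pos_right (by positivity)).mpr hT2
    have h3 : (s^4 + s^3)/(16*s) ≤ 9/64 * s^2 := by
      rw [div_le_iff₀ (by positivity)]
      nlinarith [mul_le_mul_of_nonneg_left hsle (by positivity : (0:ℝ) ≤ s^3)]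
    calc ∑ ζ : Fin n → Bool × Bool,
        μF p q S ζ * (if 16*s < TT p q S ζ then TT p q S ζ else 0)
        ≤ (∑ ζ : Fin n → Bool × Bool, μF p q S ζ * (TT p q S ζ)^2) / (16*s) := h1
      _ ≤ (s^4 + s^3)/(16*s) := h2
      _ ≤ 9/64 * s^2 := h3
      _ = 9/64 * DD p q S := by rw [hs2]
  have hE2 : ∑ ζ : Fin n → Bool × Bool,
      μF p q S ζ * (if SX p q S ζ < aa then TT p q S ζ else 0) ≤ DD p q S / 4 := by
    have hR : ∀ ζ i, SX p q S ζ < aa → s^2 ≤ (RF p q S i ζ)^2 := by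
      intro ζ i hC
      have hcl := L_clb p q S hp hq hmono i (ζ i)
      have hw0 := L_w0 p q S hp hq hmono i
      have hwi := hwle i
      have hrep := L_Rrep p q S hp hq hmono i ζ
      have h1 : wF p q S i * clF p i (ζ i) ≤ wF p q S i := by nlinarith [hcl.2, hw0]
      have h2 : -(wF p q S i) ≤ wF p q S i * clF p i (ζ i) := by nlinarith [hcl.1, hw0]
      have hRle : RF p q S i ζ ≤ -s := by
        rw [hrep]
        rw [haa] at hC
        linarith
      nlinarith
    have h := L_cheb p q S hp hq hmono (s^2) (by positivity)
      (fun ζ => SX p q S ζ < aa) hR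
    beta_reduce at h
    have heq : (DD p q S)^2/(4*s^2) = DD p q S/4 := by
      rw [hs2]
      field_simp
    linarith
  have hE3 : ∑ ζ : Fin n → Bool × Bool,
      μF p q S ζ * (if bb - 16*s < SX p q S ζ then TT p q S ζ else 0) ≤ DD p q S / 4 := by
    have hR : ∀ ζ i, bb - 16*s < SX p q S ζ → s^2 ≤ (RF p q S i ζ)^2 := by
      intro ζ i hC
      have hcl := L_clb p q S hp hq hmono i (ζ i)
      have hw0 := L_w0 p q S hp hq hmono i
      have hwi := hwle i
      have hrep := L_Rrep p q S hp hq hmono i ζ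
      have h1 : wF p q S i * clF p i (ζ i) ≤ wF p q S i := by nlinarith [hcl.2, hw0]
      have hRge : s ≤ RF p q S i ζ := by
        rw [hrep]
        rw [hbb] at hC
        linarith
      nlinarith
    have h := L_cheb p q S hp hq hmono (s^2) (by positivity)
      (fun ζ => bb - 16*s < SX p q S ζ) hR
    beta_reduce at h
    have heq : (DD p q S)^2/(4*s^2) = DD p q S/4 := by
      rw [hs2]
      field_simp
    linarith
  have h20 : (0:ℝ) < 20*s := by positivity
  have hsplit : ∑ ζ : Fin n → Bool × Bool, μF p q S ζ * (TT p q S ζ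
        - ((if 16*s < TT p q S ζ then TT p q S ζ else 0)
          + (if SX p q S ζ < aa then TT p q S ζ else 0)
          + (if bb - 16*s < SX p q S ζ then TT p q S ζ else 0))) / (20*s)
      = ((∑ ζ : Fin n → Bool × Bool, μF p q S ζ * TT p q S ζ)
        - (∑ ζ : Fin n → Bool × Bool,
            μF p q S ζ * (if 16*s < TT p q S ζ then TT p q S ζ else 0))
        - (∑ ζ : Fin n → Bool × Bool,
            μF p q S ζ * (if SX p q S ζ < aa then TT p q S ζ else 0))
        - (∑ ζ : Fin n → Bool × Bool,
            μF p q S ζ * (if bb - 16*s < SX p q S ζ then TT p q S ζ else 0))) / (20*s) := by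
    rw [← Finset.sum_div]
    congr 1
    have hterm : ∀ ζ, μF p q S ζ * (TT p q S ζ
          - ((if 16*s < TT p q S ζ then TT p q S ζ else 0)
            + (if SX p q S ζ < aa then TT p q S ζ else 0)
            + (if bb - 16*s < SX p q S ζ then TT p q S ζ else 0)))
        = μF p q S ζ * TT p q S ζ
          - μF p q S ζ * (if 16*s < TT p q S ζ then TT p q S ζ else 0)
          - μF p q S ζ * (if SX p q S ζ < aa then TT p q S ζ else 0)
          - μF p q S ζ * (if bb - 16*s < SX p q S ζ then TT p q S ζ else 0) := by
      intro ζ; ring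
    rw [Finset.sum_congr rfl fun ζ _ => hterm ζ, Finset.sum_sub_distrib,
      Finset.sum_sub_distrib, Finset.sum_sub_distrib]
  have hlow : (DD p q S - 9/64 * DD p q S - DD p q S/4 - DD p q S/4) / (20*s)
      ≤ (∑ ζ : Fin n → Bool × Bool, μF p q S ζ * f (Yfun S ζ))
        - (∑ ζ : Fin n → Bool × Bool, μF p q S ζ * f (fun i => (ζ i).1)) := by
    calc (DD p q S - 9/64 * DD p q S - DD p q S/4 - DD p q S/4) / (20*s)
        ≤ ((∑ ζ : Fin n → Bool × Bool, μF p q S ζ * TT p q S ζ)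
            - (∑ ζ : Fin n → Bool × Bool,
                μF p q S ζ * (if 16*s < TT p q S ζ then TT p q S ζ else 0))
            - (∑ ζ : Fin n → Bool × Bool,
                μF p q S ζ * (if SX p q S ζ < aa then TT p q S ζ else 0))
            - (∑ ζ : Fin n → Bool × Bool,
                μF p q S ζ * (if bb - 16*s < SX p q S ζ then TT p q S ζ else 0))) / (20*s) := by
          apply (div_le_div_iff_of_pos_right h20).mpr
          have hET := L_ET p q S hp hq hmono
          linarith
      _ = ∑ ζ : Fin n → Bool × Bool, μF p q S ζ * (TT p q S ζ
            - ((if 16*s < TT p q S ζ then TT p q S ζ else 0)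
              + (if SX p q S ζ < aa then TT p q S ζ else 0)
              + (if bb - 16*s < SX p q S ζ then TT p q S ζ else 0))) / (20*s) := hsplit.symm
      _ ≤ ∑ ζ : Fin n → Bool × Bool,
            (μF p q S ζ * f (Yfun S ζ) - μF p q S ζ * f (fun i => (ζ i).1)) :=
          Finset.sum_le_sum fun ζ _ => hpoint ζ
      _ = _ := Finset.sum_sub_distrib _ _
  have hfinal : s/60 ≤ (DD p q S - 9/64 * DD p q S - DD p q S/4 - DD p q S/4) / (20*s) := by
    have heq : (DD p q S - 9/64 * DD p q S - DD p q S/4 - DD p q S/4) / (20*s)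
        = (23/1280)*s := by
      rw [← hs2]
      field_simp
      ring
    rw [heq]
    linarith
  calc s/60 ≤ (DD p q S - 9/64 * DD p q S - DD p q S/4 - DD p q S/4) / (20*s) := hfinal
    _ ≤ _ := hlow.trans hstep1

lemma shrink_aux {ι : Type*} [DecidableEq ι] : ∀ (k : ℕ) (F : Finset ι) (f : ι → ℝ),
    F.card ≤ k → (∀ i ∈ F, f i ≤ 1) → 1/2 ≤ ∑ i ∈ F, f i →
    ∃ G, G ⊆ F ∧ 1/2 ≤ ∑ i ∈ G, f i ∧ ∑ i ∈ G, f i ≤ 3/2 := by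
  intro k
  induction k with
  | zero =>
      intro F f hcard h01 hlb
      have hF : F = ∅ := Finset.card_eq_zero.mp (Nat.le_zero.mp hcard)
      subst hF
      simp at hlb
      linarith
  | succ k IH =>
      intro F f hcard h01 hlb
      by_cases hub : ∑ i ∈ F, f i ≤ 3/2
      · exact ⟨F, Finset.Subset.refl F, hlb, hub⟩
      · push_neg at hub
        have hne : F.Nonempty := by
          rcases Finset.eq_empty_or_nonempty F with h | h
          · subst h; simp at hub; linarith
          · exact h
        obtain ⟨x, hx⟩ := hne
        have hsum : ∑ i ∈ F.erase x, f i = (∑ i ∈ F, f i) - f x :=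
          Finset.sum_erase_eq_sub hx
        have h1 : 1/2 ≤ ∑ i ∈ F.erase x, f i := by
          have := h01 x hx
          rw [hsum]
          linarith
        have hcard2 : (F.erase x).card ≤ k := by
          have := Finset.card_erase_of_mem hx
          omega
        obtain ⟨G, hG, h2, h3⟩ := IH (F.erase x) f hcard2
          (fun i hi => h01 i (Finset.mem_of_mem_erase hi)) h1
        exact ⟨G, hG.trans (Finset.erase_subset x F), h2, h3⟩

lemma case_half {n : ℕ} (p q : Fin n → ℝ)
    (hp : ∀ i, p i ∈ Set.Icc (0:ℝ) 1) (hq : ∀ i, q i ∈ Set.Icc (0:ℝ) 1)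
    (C : Finset (Fin n)) (hmono : ∀ i ∈ C, p i ≤ q i)
    (t : ℝ) (ht0 : 0 ≤ t) (hC : t/2 ≤ ∑ i ∈ C, (q i - p i)^2) :
    (1/100) * min 1 (Real.sqrt t) ≤ tv (berProd p) (berProd q) := by
  by_cases hu : ∑ i ∈ C, (q i - p i)^2 ≤ 3/2
  · have h := main_lemma p q hp hq C hmono hu
    have h1 : Real.sqrt (t/2) ≤ Real.sqrt (∑ i ∈ C, (q i - p i)^2) :=
      Real.sqrt_le_sqrt hC
    have h2 : (6/10) * Real.sqrt t ≤ Real.sqrt (t/2) := by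
      rw [show (6/10) * Real.sqrt t = Real.sqrt t * (6/10) from by ring]
      rw [← Real.sqrt_sq (by norm_num : (0:ℝ) ≤ 6/10)]
      rw [← Real.sqrt_mul ht0]
      apply Real.sqrt_le_sqrt
      nlinarith
    have hmin : min 1 (Real.sqrt t) ≤ Real.sqrt t := min_le_right _ _
    have h3 : (1/100) * min 1 (Real.sqrt t) ≤ (1/100) * Real.sqrt t :=
      mul_le_mul_of_nonneg_left hmin (by norm_num)
    calc (1/100) * min 1 (Real.sqrt t) ≤ (1/100) * Real.sqrt t := h3
      _ ≤ Real.sqrt (∑ i ∈ C, (q i - p i)^2) / 60 := by linarith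
      _ ≤ tv (berProd p) (berProd q) := h
  · push_neg at hu
    have hsq1 : ∀ i ∈ C, (q i - p i)^2 ≤ 1 := by
      intro i _
      have h1 := (hp i).1
      have h2 := (hp i).2
      have h3 := (hq i).1
      have h4 := (hq i).2
      nlinarith
    obtain ⟨G, hG, h2, h3⟩ := shrink_aux C.card C (fun i => (q i - p i)^2)
      le_rfl hsq1 (by linarith)
    have h := main_lemma p q hp hq G (fun i hi => hmono i (hG hi)) h3
    have h4 : (6/10 : ℝ) ≤ Real.sqrt (∑ i ∈ G, (q i - p i)^2) := by
      have h5 : Real.sqrt ((6/10:ℝ)^2) ≤ Real.sqrt (∑ i ∈ G, (q i - p i)^2) := by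
        apply Real.sqrt_le_sqrt
        nlinarith
      rwa [Real.sqrt_sq (by norm_num : (0:ℝ) ≤ 6/10)] at h5
    have hmin : min 1 (Real.sqrt t) ≤ 1 := min_le_left _ _
    calc (1/100) * min 1 (Real.sqrt t) ≤ (1/100) * 1 :=
        mul_le_mul_of_nonneg_left hmin (by norm_num)
      _ ≤ Real.sqrt (∑ i ∈ G, (q i - p i)^2) / 60 := by linarith
      _ ≤ tv (berProd p) (berProd q) := h

end Main

end BerTV

theorem berProd_tv_lower_bound :
    ∃ c : ℝ, c > 0 ∧
      ∀ (n : ℕ) (p q : Fin n → ℝ),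
        (∀ i, p i ∈ Set.Icc (0:ℝ) 1) → (∀ i, q i ∈ Set.Icc (0:ℝ) 1) →
        tv (berProd p) (berProd q)
          ≥ c * min 1 (Real.sqrt (∑ i, (p i - q i)^2)) := by
  classical
  refine ⟨1/100, by norm_num, ?_⟩
  intro n p q hp hq
  have ht0 : (0:ℝ) ≤ ∑ i, (p i - q i)^2 := Finset.sum_nonneg fun i _ => sq_nonneg _
  set Ip := Finset.univ.filter (fun i => p i < q i) with hIp
  set Im := Finset.univ.filter (fun i => q i < p i) with hIm
  have hsplit : ∑ i, (p i - q i)^2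
      ≤ (∑ i ∈ Ip, (q i - p i)^2) + (∑ i ∈ Im, (p i - q i)^2) := by
    have h1 : ∑ i, (p i - q i)^2
        = (∑ i ∈ Ip, (p i - q i)^2)
          + ∑ i ∈ Finset.univ.filter (fun i => ¬ p i < q i), (p i - q i)^2 :=
      (Finset.sum_filter_add_sum_filter_not Finset.univ _ _).symm
    have h2 : ∑ i ∈ Finset.univ.filter (fun i => ¬ p i < q i), (p i - q i)^2
        ≤ ∑ i ∈ Im, (p i - q i)^2 := by
      rw [← Finset.sum_filter_add_sum_filter_not
        (Finset.univ.filter (fun i => ¬ p i < q i)) (fun i => q i < p i)]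
      have h3 : ∑ i ∈ (Finset.univ.filter (fun i => ¬ p i < q i)).filter
          (fun i => ¬ q i < p i), (p i - q i)^2 = 0 := by
        apply Finset.sum_eq_zero
        intro i hi
        rcases Finset.mem_filter.mp hi with ⟨hi1, hi2⟩
        rcases Finset.mem_filter.mp hi1 with ⟨_, hi3⟩
        have : p i = q i := le_antisymm (not_lt.mp hi2 |> fun h => by linarith [not_lt.mp hi2, not_lt.mp hi3]) (not_lt.mp hi3 |> fun h => by linarith)
        rw [this]
        ring
      have h4 : ∑ i ∈ (Finset.univ.filter (fun i => ¬ p i < q i)).filter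
          (fun i => q i < p i), (p i - q i)^2 ≤ ∑ i ∈ Im, (p i - q i)^2 := by
        apply Finset.sum_le_sum_of_subset_of_nonneg
        · intro i hi
          rcases Finset.mem_filter.mp hi with ⟨_, hi2⟩
          exact Finset.mem_filter.mpr ⟨Finset.mem_univ i, hi2⟩
        · intro i _ _
          exact sq_nonneg _
      linarith
    have h5 : ∑ i ∈ Ip, (p i - q i)^2 = ∑ i ∈ Ip, (q i - p i)^2 :=
      Finset.sum_congr rfl fun i _ => by ring
    linarith
  rcases le_or_gt (∑ i ∈ Ip, (q i - p i)^2) (∑ i ∈ Im, (p i - q i)^2) with hcmp | hcmp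
  · have hC : (∑ i, (p i - q i)^2)/2 ≤ ∑ i ∈ Im, (p i - q i)^2 := by linarith
    have h := BerTV.case_half q p hq hp Im
      (fun i hi => le_of_lt (Finset.mem_filter.mp hi).2)
      (∑ i, (p i - q i)^2) ht0 hC
    rw [BerTV.tv_comm] at h
    exact h
  · have hC : (∑ i, (p i - q i)^2)/2 ≤ ∑ i ∈ Ip, (q i - p i)^2 := by linarith
    exact BerTV.case_half p q hp hq Ip
      (fun i hi => le_of_lt (Finset.mem_filter.mp hi).2)
      (∑ i, (p i - q i)^2) ht0 hC
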